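/- Let n ≥ 2, let ℝⁿ₊ = {x = (x', xₙ) ∈ ℝⁿ : xₙ > 0} be the open upper half-space, and let ψ : ℝⁿ₊ → ℝ be locally integrable. Define the even reflection Ψ : ℝⁿ → ℝ by Ψ(x', xₙ) = ψ(x', xₙ) if xₙ ≥ 0 and Ψ(x', xₙ) = ψ(x', −xₙ) if xₙ < 0. Then for every x ∈ ℝⁿ₊ and every R > 0 such that ψ is integrable on B(x,R) ∩ ℝⁿ₊, one has ⨍_{B(x,R)} |Ψ − (Ψ)_{B(x,R)}| ≤ 4 ⨍_{B(x,R) ∩ ℝⁿ₊} |ψ − (ψ)_{B(x,R) ∩ ℝⁿ₊}|, where ⨍_E g := (1/|E|) ∫_E g denotes the integral average over E with respect to Lebesgue measure and (g)_E := ⨍_E g. -/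

import Mathlib

open MeasureTheory Metric

noncomputable def reflHyp {n : ℕ} (i : Fin n) :
    EuclideanSpace ℝ (Fin n) ≃ₗᵢ[ℝ] EuclideanSpace ℝ (Fin n) :=
  (ℝ ∙ (EuclideanSpace.single i (1:ℝ)))ᗮ.reflection

lemma reflHyp_apply {n : ℕ} (i : Fin n) (y : EuclideanSpace ℝ (Fin n)) :
    reflHyp i y = y - EuclideanSpace.single i (2 * y i) := by
  have h1 : ‖EuclideanSpace.single i (1:ℝ)‖ = 1 := by
    simp [EuclideanSpace.norm_single]
  rw [reflHyp, Submodule.reflection_apply, Submodule.starProjection_orthogonal_val,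
    Submodule.starProjection_singleton]
  rw [EuclideanSpace.inner_single_left, h1]
  ext j
  simp [EuclideanSpace.single_apply]
  by_cases h : j = i <;> simp [h] <;> ring

lemma main_estimate {n : ℕ} (i : Fin n) (ψ Ψ : EuclideanSpace ℝ (Fin n) → ℝ)
    (hΨ : ∀ y : EuclideanSpace ℝ (Fin n),
      Ψ y = if 0 ≤ y i then ψ y else ψ (y - EuclideanSpace.single i (2 * y i)))
    (x : EuclideanSpace ℝ (Fin n)) (hx : 0 < x i)
    (R : ℝ) (hR : 0 < R)
    (hint : IntegrableOn ψ (ball x R ∩ {y : EuclideanSpace ℝ (Fin n) | 0 < y i}) volume) :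
    ⨍ y in ball x R, |Ψ y - ⨍ z in ball x R, Ψ z|
      ≤ 4 * ⨍ y in ball x R ∩ {y : EuclideanSpace ℝ (Fin n) | 0 < y i},
          |ψ y - ⨍ z in ball x R ∩ {z : EuclideanSpace ℝ (Fin n) | 0 < z i}, ψ z| := by
  classical
  set s : EuclideanSpace ℝ (Fin n) → EuclideanSpace ℝ (Fin n) := fun y => y - EuclideanSpace.single i (2 * y i) with hs_def
  have hs_eq : s = ⇑(reflHyp i) := funext fun y => (reflHyp_apply i y).symm
  have hmp : MeasurePreserving s (volume : Measure (EuclideanSpace ℝ (Fin n))) volume := by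
    rw [hs_eq]; exact (reflHyp i).measurePreserving
  have hemb : MeasurableEmbedding s := by
    rw [hs_eq]; exact (reflHyp i).toHomeomorph.measurableEmbedding
  have hcont : Continuous fun y : EuclideanSpace ℝ (Fin n) => y i := (EuclideanSpace.proj (𝕜 := ℝ) i).continuous
  set B : Set (EuclideanSpace ℝ (Fin n)) := ball x R with hB_def
  set P : Set (EuclideanSpace ℝ (Fin n)) := {y | 0 < y i} with hP_def
  set Nn : Set (EuclideanSpace ℝ (Fin n)) := {y | y i < 0} with hN_def
  have hPopen : IsOpen P := isOpen_lt continuous_const hcont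
  have hNopen : IsOpen Nn := isOpen_lt hcont continuous_const
  have hPmeas : MeasurableSet P := hPopen.measurableSet
  have hNmeas : MeasurableSet Nn := hNopen.measurableSet
  have hBmeas : MeasurableSet B := measurableSet_ball
  -- coordinates of s y
  have hs_coord : ∀ (y : EuclideanSpace ℝ (Fin n)) (j : Fin n), s y j = y j - (if j = i then 2 * y i else 0) := by
    intro y j
    simp only [hs_def, PiLp.sub_apply, EuclideanSpace.single_apply]
  -- s maps B ∩ Nn into B ∩ P
  have hmaps : ∀ y ∈ B ∩ Nn, s y ∈ B ∩ P := by
    rintro y ⟨hyB, hyN⟩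
    have hyN' : y i < 0 := hyN
    constructor
    · have hdist : dist (s y) x ≤ dist y x := by
        rw [EuclideanSpace.dist_eq, EuclideanSpace.dist_eq]
        apply Real.sqrt_le_sqrt
        apply Finset.sum_le_sum
        intro j _
        rcases eq_or_ne j i with rfl | hj
        · rw [hs_coord, if_pos rfl]
          have : dist (y j - 2 * y j) (x j) ^ 2 ≤ dist (y j) (x j) ^ 2 := by
            rw [Real.dist_eq, Real.dist_eq, sq_abs, sq_abs]
            nlinarith [hx, hyN']
          exact this
        · rw [hs_coord, if_neg hj, sub_zero]
      exact lt_of_le_of_lt hdist (mem_ball.mp hyB)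
    · show 0 < s y i
      rw [hs_coord, if_pos rfl]
      linarith
  have hsub : B ∩ Nn ⊆ s ⁻¹' (B ∩ P) := fun y hy => hmaps y hy
  -- half-space with boundary
  have hZ : volume {y : EuclideanSpace ℝ (Fin n) | y i = 0} = 0 := by
    have hker : {y : EuclideanSpace ℝ (Fin n) | y i = 0}
        = ((LinearMap.ker (EuclideanSpace.projₗ (𝕜 := ℝ) i) : Submodule ℝ (EuclideanSpace ℝ (Fin n))) : Set (EuclideanSpace ℝ (Fin n))) := by
      ext y; simp [LinearMap.mem_ker]
    rw [hker]
    apply Measure.addHaar_submodule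
    intro htop
    have h1 : EuclideanSpace.single i (1:ℝ) ∈ LinearMap.ker (EuclideanSpace.projₗ (𝕜 := ℝ) i) := by
      rw [htop]; trivial
    simp [LinearMap.mem_ker, EuclideanSpace.single_apply] at h1
  have hae : (B ∩ {y : EuclideanSpace ℝ (Fin n) | 0 ≤ y i} : Set (EuclideanSpace ℝ (Fin n))) =ᵐ[volume] ((B ∩ P : Set (EuclideanSpace ℝ (Fin n)))) := by
    rw [Filter.eventuallyEq_set]
    have : ∀ᵐ y : EuclideanSpace ℝ (Fin n) ∂volume, y i ≠ 0 := by
      rw [ae_iff]; simpa using hZ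
    filter_upwards [this] with y hy
    constructor
    · rintro ⟨h1, h2⟩
      have h2' : (0:ℝ) ≤ y i := h2
      exact ⟨h1, show (0:ℝ) < y i from lt_of_le_of_ne h2' (Ne.symm hy)⟩
    · rintro ⟨h1, h2⟩
      have h2' : (0:ℝ) < y i := h2
      exact ⟨h1, show (0:ℝ) ≤ y i from le_of_lt h2'⟩
  -- basic measure facts
  have hBP_pos : 0 < volume (B ∩ P) :=
    (isOpen_ball.inter hPopen).measure_pos volume ⟨x, mem_ball_self hR, hx⟩
  have hB_fin : volume B ≠ ⊤ := measure_ball_lt_top.ne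
  have hB_pos : 0 < volume B := measure_ball_pos volume x hR
  have hBPfin : volume (B ∩ P) ≠ ⊤ := (lt_of_le_of_lt (measure_mono Set.inter_subset_left) measure_ball_lt_top).ne
  have hBtr : 0 < (volume B).toReal := ENNReal.toReal_pos hB_pos.ne' hB_fin
  have hBPtr : 0 < (volume (B ∩ P)).toReal := ENNReal.toReal_pos hBP_pos.ne' hBPfin
  have htr_le : (volume (B ∩ P)).toReal ≤ (volume B).toReal :=
    ENNReal.toReal_mono hB_fin (measure_mono Set.inter_subset_left)
  -- integrability of Ψ
  have hint_nonneg : IntegrableOn ψ (B ∩ {y : EuclideanSpace ℝ (Fin n) | 0 ≤ y i}) volume := by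
    rw [IntegrableOn, Measure.restrict_congr_set hae]; exact hint
  have hΨ_pos_eq : Set.EqOn Ψ ψ {y : EuclideanSpace ℝ (Fin n) | 0 ≤ y i} := by
    intro y hy
    have hy' : (0:ℝ) ≤ y i := hy
    rw [hΨ y, if_pos hy']
  have hΨ_neg_eq : Set.EqOn Ψ (fun y => ψ (s y)) Nn := by
    intro y hy
    have hy' : y i < 0 := hy
    rw [hΨ y, if_neg (not_le.mpr hy')]
  have hint_comp0 : IntegrableOn (ψ ∘ s) (s ⁻¹' (B ∩ P)) volume :=
    (MeasurePreserving.integrableOn_comp_preimage (f := ψ) (s := B ∩ P) hmp hemb).mpr hint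
  have hint_comp : IntegrableOn (fun y => ψ (s y)) (s ⁻¹' (B ∩ P)) volume := hint_comp0
  have hintΨ_pos : IntegrableOn Ψ (B ∩ {y : EuclideanSpace ℝ (Fin n) | 0 ≤ y i}) volume :=
    hint_nonneg.congr_fun (fun y hy => (hΨ_pos_eq hy.2).symm) (hBmeas.inter (measurableSet_le measurable_const hcont.measurable))
  have hintΨ_neg : IntegrableOn Ψ (B ∩ Nn) volume :=
    (hint_comp.mono_set hsub).congr_fun (fun y hy => (hΨ_neg_eq hy.2).symm) (hBmeas.inter hNmeas)
  have hBsplit : B = (B ∩ {y : EuclideanSpace ℝ (Fin n) | 0 ≤ y i}) ∪ (B ∩ Nn) := by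
    ext y
    simp only [Set.mem_union, Set.mem_inter_iff, Set.mem_setOf_eq, hN_def]
    constructor
    · intro h; rcases le_or_gt 0 (y i) with h' | h'
      · exact Or.inl ⟨h, h'⟩
      · exact Or.inr ⟨h, h'⟩
    · rintro (⟨h, _⟩ | ⟨h, _⟩) <;> exact h
  have hdisj : Disjoint (B ∩ {y : EuclideanSpace ℝ (Fin n) | 0 ≤ y i}) (B ∩ Nn) := by
    apply Set.disjoint_left.mpr
    rintro y ⟨_, h1⟩ ⟨_, h2⟩
    have h1' : (0:ℝ) ≤ y i := h1
    have h2' : y i < 0 := h2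
    exact absurd h2' (not_lt.mpr h1')
  have hintΨ : IntegrableOn Ψ B volume := by
    rw [hBsplit]; exact hintΨ_pos.union hintΨ_neg
  -- constants
  set c : ℝ := ⨍ z in B ∩ P, ψ z with hc_def
  set m : ℝ := ⨍ z in B, Ψ z with hm_def
  set I : ℝ := ∫ y in B ∩ P, |ψ y - c| ∂volume with hI_def
  have hintabs : IntegrableOn (fun y => |ψ y - c|) (B ∩ P) volume :=
    (hint.sub (integrableOn_const (lt_of_le_of_lt (measure_mono Set.inter_subset_left) measure_ball_lt_top).ne)).abs
  have hI_nonneg : 0 ≤ I := setIntegral_nonneg (hBmeas.inter hPmeas) (fun y _ => abs_nonneg _)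
  have hintΨc : IntegrableOn (fun y => |Ψ y - c|) B volume :=
    (hintΨ.sub (integrableOn_const measure_ball_lt_top.ne)).abs
  -- Step B : ∫_B |Ψ - c| ≤ 2 I
  have stepB : ∫ y in B, |Ψ y - c| ∂volume ≤ 2 * I := by
    have h1 : ∫ y in B, |Ψ y - c| ∂volume
        = (∫ y in B ∩ {y : EuclideanSpace ℝ (Fin n) | 0 ≤ y i}, |Ψ y - c| ∂volume) + ∫ y in B ∩ Nn, |Ψ y - c| ∂volume := by
      have h0 := setIntegral_union (f := fun y => |Ψ y - c|) (μ := volume) hdisj (hBmeas.inter hNmeas)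
        (hintΨc.mono_set Set.inter_subset_left) (hintΨc.mono_set Set.inter_subset_left)
      rw [← hBsplit] at h0
      exact h0
    have h2 : ∫ y in B ∩ {y : EuclideanSpace ℝ (Fin n) | 0 ≤ y i}, |Ψ y - c| ∂volume = I := by
      rw [setIntegral_congr_set hae]
      apply setIntegral_congr_fun (hBmeas.inter hPmeas)
      intro y hy
      show |Ψ y - c| = |ψ y - c|
      rw [hΨ_pos_eq (show (0:ℝ) ≤ y i from le_of_lt hy.2)]
    have h3 : ∫ y in B ∩ Nn, |Ψ y - c| ∂volume ≤ I := by
      have he1 : ∫ y in B ∩ Nn, |Ψ y - c| ∂volume = ∫ y in B ∩ Nn, |ψ (s y) - c| ∂volume := by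
        apply setIntegral_congr_fun (hBmeas.inter hNmeas)
        intro y hy
        show |Ψ y - c| = |ψ (s y) - c|
        rw [hΨ_neg_eq hy.2]
      have he2 : ∫ y in s ⁻¹' (B ∩ P), |ψ (s y) - c| ∂volume = I :=
        hmp.setIntegral_preimage_emb hemb (fun y => |ψ y - c|) (B ∩ P)
      have hfi0 : IntegrableOn ((fun y => |ψ y - c|) ∘ s) (s ⁻¹' (B ∩ P)) volume :=
        (MeasurePreserving.integrableOn_comp_preimage (f := fun y => |ψ y - c|)
          (s := B ∩ P) hmp hemb).mpr hintabs
      have hfi' : IntegrableOn (fun y => |ψ (s y) - c|) (s ⁻¹' (B ∩ P)) volume := hfi0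
      have hnn : 0 ≤ᵐ[volume.restrict (s ⁻¹' (B ∩ P))] (fun y => |ψ (s y) - c|) :=
        Filter.Eventually.of_forall fun y => abs_nonneg _
      have hst : (B ∩ Nn : Set (EuclideanSpace ℝ (Fin n))) ≤ᵐ[volume] (s ⁻¹' (B ∩ P)) :=
        HasSubset.Subset.eventuallyLE hsub
      have hle := setIntegral_mono_set hfi' hnn hst
      rw [he1, ← he2]
      exact hle
    linarith [h1, h2, h3]
  -- Step C : ∫_B |Ψ - m| ≤ 2 ∫_B |Ψ - c|
  have hm_eq : (volume B).toReal * m = ∫ y in B, Ψ y ∂volume := by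
    rw [hm_def, setAverage_eq, smul_eq_mul, measureReal_def, ← mul_assoc, mul_inv_cancel₀ hBtr.ne', one_mul]
  have habs_cm : (volume B).toReal * |c - m| ≤ ∫ y in B, |Ψ y - c| ∂volume := by
    have h4 : ∫ y in B, (c - Ψ y) ∂volume = (volume B).toReal * c - ∫ y in B, Ψ y ∂volume := by
      rw [integral_sub (integrableOn_const (C := c) measure_ball_lt_top.ne) hintΨ]
      simp [Measure.restrict_apply_univ, measureReal_def]
      rfl
    have h5 : (volume B).toReal * (c - m) = ∫ y in B, (c - Ψ y) ∂volume := by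
      rw [h4, ← hm_eq]; ring
    have h6 : |∫ y in B, (c - Ψ y) ∂volume| ≤ ∫ y in B, |c - Ψ y| ∂volume := by
      have := norm_integral_le_integral_norm (μ := volume.restrict B) (fun y => c - Ψ y)
      simpa [Real.norm_eq_abs] using this
    calc (volume B).toReal * |c - m| = |(volume B).toReal * (c - m)| := by
          rw [abs_mul, abs_of_pos hBtr]
      _ = |∫ y in B, (c - Ψ y) ∂volume| := by rw [h5]
      _ ≤ ∫ y in B, |c - Ψ y| ∂volume := h6
      _ = ∫ y in B, |Ψ y - c| ∂volume := by
          apply setIntegral_congr_fun hBmeas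
          intro y _; exact abs_sub_comm _ _
  have stepC : ∫ y in B, |Ψ y - m| ∂volume ≤ 2 * ∫ y in B, |Ψ y - c| ∂volume := by
    have hintΨm : IntegrableOn (fun y => |Ψ y - m|) B volume :=
      (hintΨ.sub (integrableOn_const measure_ball_lt_top.ne)).abs
    have hptwise : ∀ y, |Ψ y - m| ≤ |Ψ y - c| + |c - m| := fun y => by
      calc |Ψ y - m| = |(Ψ y - c) + (c - m)| := by ring_nf
        _ ≤ |Ψ y - c| + |c - m| := abs_add_le _ _
    have h7 : ∫ y in B, |Ψ y - m| ∂volume ≤ ∫ y in B, (|Ψ y - c| + |c - m|) ∂volume := by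
      apply setIntegral_mono_on hintΨm
        (hintΨc.add (integrableOn_const measure_ball_lt_top.ne)) hBmeas
      intro y _; exact hptwise y
    have h8 : ∫ y in B, (|Ψ y - c| + |c - m|) ∂volume
        = (∫ y in B, |Ψ y - c| ∂volume) + (volume B).toReal * |c - m| := by
      rw [integral_add hintΨc (integrableOn_const measure_ball_lt_top.ne)]
      simp [Measure.restrict_apply_univ, measureReal_def]
    linarith [h7, h8, habs_cm]
  -- conclude
  have hfinal : ∫ y in B, |Ψ y - m| ∂volume ≤ 4 * I := by linarith [stepB, stepC]
  rw [setAverage_eq, setAverage_eq, smul_eq_mul, smul_eq_mul]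
  calc (volume B).toReal⁻¹ * ∫ y in B, |Ψ y - m| ∂volume
      ≤ (volume B).toReal⁻¹ * (4 * I) := by
        apply mul_le_mul_of_nonneg_left hfinal (inv_nonneg.mpr hBtr.le)
    _ ≤ (volume (B ∩ P)).toReal⁻¹ * (4 * I) := by
        apply mul_le_mul_of_nonneg_right (inv_anti₀ hBPtr htr_le)
        positivity
    _ = 4 * ((volume (B ∩ P)).toReal⁻¹ * I) := by ring

/-- Even reflection estimate: if `Ψ` is the even reflection of `ψ` across the hyperplane
`{xₙ = 0}`, then for any ball centered in the open upper half-space, the mean oscillation of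
`Ψ` over the ball is controlled (with constant 4) by the mean oscillation of `ψ` over the
intersection of the ball with the upper half-space. -/
theorem reflection_extension_estimate
    (n : ℕ) (hn : 2 ≤ n)
    (ψ Ψ : EuclideanSpace ℝ (Fin n) → ℝ)
    (hΨ : ∀ x : EuclideanSpace ℝ (Fin n),
      Ψ x = if 0 ≤ x ⟨n - 1, by omega⟩ then ψ x
            else ψ (x - EuclideanSpace.single ⟨n - 1, by omega⟩ (2 * x ⟨n - 1, by omega⟩)))
    (x : EuclideanSpace ℝ (Fin n)) (hx : 0 < x ⟨n - 1, by omega⟩)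
    (R : ℝ) (hR : 0 < R)
    (hint : IntegrableOn ψ
      (ball x R ∩ {y : EuclideanSpace ℝ (Fin n) | 0 < y ⟨n - 1, by omega⟩}) volume) :
    ⨍ y in ball x R, |Ψ y - ⨍ z in ball x R, Ψ z|
      ≤ 4 * ⨍ y in ball x R ∩ {y : EuclideanSpace ℝ (Fin n) | 0 < y ⟨n - 1, by omega⟩},
          |ψ y - ⨍ z in ball x R ∩ {z : EuclideanSpace ℝ (Fin n) | 0 < z ⟨n - 1, by omega⟩}, ψ z| :=
  main_estimate ⟨n - 1, by omega⟩ ψ Ψ hΨ x hx R hR hint
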